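/- If all n agents have the same (possibly non-additive, non-negative) valuation v, then a GMMS allocation exists: there is a partition (A_1,...,A_n) of the goods such that for every agent i and every subset J ∋ i, v(A_i) ≥ μ^{|J|}(∪_{j∈J} A_j), where μ^k(S) is the k-maximin share under v. -/

import Mathlib

open Finset

/-- `k`-maximin share for a general (possibly non-additive) valuation
`v : Finset α → ℝ` restricted to `S`. -/
noncomputable def muG {α : Type*} [Fintype α] [DecidableEq α]
    (v : Finset α → ℝ) (k : ℕ) (S : Finset α) : ℝ :=
  ⨆ P : α → Fin k, ⨅ j : Fin k, v (S.filter (fun g => P g = j))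

/-- If all `n` agents have the same non-negative valuation, a GMMS allocation
exists. -/
theorem gmms_exists_identical {α : Type*} [Fintype α] [DecidableEq α] {n : ℕ}
    (hn : 0 < n) (v : Finset α → ℝ) (hv : ∀ S, 0 ≤ v S) :
    ∃ A : Fin n → Finset α,
      (∀ i j, i ≠ j → Disjoint (A i) (A j)) ∧
      Finset.univ.biUnion A = Finset.univ ∧
      ∀ (i : Fin n) (J : Finset (Fin n)), i ∈ J →
        muG v J.card (J.biUnion A) ≤ v (A i) := by
  classical
  haveI : Nonempty (Fin n) := ⟨⟨0, hn⟩⟩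
  -- the finite set of achievable values
  set V : Finset ℝ := (Finset.univ : Finset (Finset α)).image v with hV
  have hmemV : ∀ S : Finset α, v S ∈ V := fun S => mem_image_of_mem v (mem_univ S)
  set q : ℝ := 1 / (n + 1) with hq
  have hq0 : 0 < q := by positivity
  have hq1 : q ≤ 1 := by
    rw [hq, div_le_one (by positivity)]
    have : (0:ℝ) ≤ n := Nat.cast_nonneg n
    linarith
  have hnq : (n : ℝ) * q < 1 := by
    rw [hq, mul_one_div, div_lt_one (by positivity)]
    linarith
  set idx : ℝ → ℕ := fun x => (V.filter (fun y => y < x)).card with hidx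
  set f : ℝ → ℝ := fun x => -q ^ (idx x) with hf
  have hfneg : ∀ x, f x ≤ 0 := fun x => neg_nonpos.mpr (pow_nonneg hq0.le _)
  have hfstep : ∀ t x : ℝ, t ∈ V → t < x → -(q ^ (idx t + 1)) ≤ f x := by
    intro t x ht htx
    have hss : insert t (V.filter (fun y => y < t)) ⊆ V.filter (fun y => y < x) := by
      intro y hy
      rcases mem_insert.mp hy with rfl | hy
      · exact mem_filter.mpr ⟨ht, htx⟩
      · rcases mem_filter.mp hy with ⟨h1, h2⟩
        exact mem_filter.mpr ⟨h1, h2.trans htx⟩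
    have hcard : idx t + 1 ≤ idx x := by
      have h1 : (insert t (V.filter (fun y => y < t))).card = idx t + 1 := by
        rw [card_insert_of_notMem]
        intro hmem
        exact absurd (mem_filter.mp hmem).2 (lt_irrefl t)
      calc idx t + 1 = (insert t (V.filter (fun y => y < t))).card := h1.symm
        _ ≤ (V.filter (fun y => y < x)).card := card_le_card hss
        _ = idx x := rfl
    have hpow : q ^ (idx x) ≤ q ^ (idx t + 1) := pow_le_pow_of_le_one hq0.le hq1 hcard
    have : -(q ^ (idx t + 1)) ≤ -(q ^ (idx x)) := neg_le_neg hpow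
    simpa [hf] using this
  -- choose an optimal assignment
  obtain ⟨P, hP⟩ := Finite.exists_max
    (fun R : α → Fin n => ∑ j : Fin n, f (v (univ.filter (fun g => R g = j))))
  set A : Fin n → Finset α := fun j => univ.filter (fun g => P g = j) with hA
  refine ⟨A, ?_, ?_, ?_⟩
  · intro i j hij
    rw [Finset.disjoint_left]
    intro a ha hb
    rw [hA, mem_filter] at ha hb
    exact hij (ha.2.symm.trans hb.2)
  · refine eq_univ_of_forall fun g => ?_
    exact mem_biUnion.mpr ⟨P g, mem_univ _, mem_filter.mpr ⟨mem_univ _, rfl⟩⟩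
  · intro i J hiJ
    have hJne : J.Nonempty := ⟨i, hiJ⟩
    have hk : 0 < J.card := card_pos.mpr hJne
    haveI : Nonempty (Fin J.card) := ⟨⟨0, hk⟩⟩
    have hS : J.biUnion A = univ.filter (fun g => P g ∈ J) := by
      ext g
      simp only [mem_biUnion, hA, mem_filter, mem_univ, true_and]
      constructor
      · rintro ⟨j, hj, rfl⟩; exact hj
      · intro h; exact ⟨P g, h, rfl⟩
    rw [muG, hS]
    apply ciSup_le
    intro Q
    by_contra hcon
    push_neg at hcon
    have hpart : ∀ j' : Fin J.card,
        v (A i) < v ((univ.filter (fun g => P g ∈ J)).filter (fun g => Q g = j')) := by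
      intro j'
      exact lt_of_lt_of_le hcon (ciInf_le (Set.finite_range _).bddBelow j')
    obtain ⟨i0, hi0J, hi0min⟩ := Finset.exists_min_image J (fun j => v (A j)) hJne
    have htV : v (A i0) ∈ V := hmemV _
    have htlt : ∀ j' : Fin J.card,
        v (A i0) < v ((univ.filter (fun g => P g ∈ J)).filter (fun g => Q g = j')) :=
      fun j' => lt_of_le_of_lt (hi0min i hiJ) (hpart j')
    set σ : Fin J.card → Fin n := fun j' => ((J.orderIsoOfFin rfl j') : Fin n) with hσ
    have hσJ : ∀ j', σ j' ∈ J := fun j' => (J.orderIsoOfFin rfl j').2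
    have hσinj : Function.Injective σ :=
      fun a b h => (J.orderIsoOfFin rfl).injective (Subtype.ext h)
    set P' : α → Fin n := fun g => if P g ∈ J then σ (Q g) else P g with hP'def
    set A' : Fin n → Finset α := fun j => univ.filter (fun g => P' g = j) with hA'
    have hout : ∀ j ∉ J, A' j = A j := by
      intro j hj
      ext g
      simp only [hA', hA, mem_filter, mem_univ, true_and, hP'def]
      by_cases hg : P g ∈ J
      · simp only [if_pos hg]
        constructor
        · intro h; exact absurd (h ▸ hσJ (Q g)) hj
        · intro h; exact absurd (h ▸ hg) hj
      · simp only [if_neg hg]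
    have hin : ∀ j' : Fin J.card,
        A' (σ j') = (univ.filter (fun g => P g ∈ J)).filter (fun g => Q g = j') := by
      intro j'
      ext g
      simp only [hA', mem_filter, mem_univ, true_and, hP'def]
      by_cases hg : P g ∈ J
      · simp only [if_pos hg, hσinj.eq_iff]
        tauto
      · simp only [if_neg hg]
        constructor
        · intro h; exact absurd (h ▸ hσJ j') hg
        · intro h; exact absurd h.1 hg
    -- the exchange strictly increases the potential
    have hsplit : ∀ B : Fin n → Finset α,
        ∑ j : Fin n, f (v (B j)) = ∑ j ∈ univ \ J, f (v (B j)) + ∑ j ∈ J, f (v (B j)) :=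
      fun B => (Finset.sum_sdiff (subset_univ J)).symm
    have hJsum' : ∑ j ∈ J, f (v (A' j)) = ∑ j' : Fin J.card, f (v (A' (σ j'))) := by
      rw [← Finset.sum_coe_sort J (fun j => f (v (A' j)))]
      exact (Fintype.sum_equiv (J.orderIsoOfFin rfl).toEquiv
        (fun j' => f (v (A' (σ j')))) (fun x => f (v (A' (x : Fin n)))) (fun j' => rfl)).symm
    have hnew_ge : -((J.card : ℝ) * q ^ (idx (v (A i0)) + 1)) ≤ ∑ j ∈ J, f (v (A' j)) := by
      rw [hJsum']
      have h1 : ∑ _j' : Fin J.card, (-(q ^ (idx (v (A i0)) + 1)))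
          ≤ ∑ j' : Fin J.card, f (v (A' (σ j'))) := by
        apply Finset.sum_le_sum
        intro j' _
        rw [hin j']
        exact hfstep _ _ htV (htlt j')
      calc -((J.card : ℝ) * q ^ (idx (v (A i0)) + 1))
          = ∑ _j' : Fin J.card, (-(q ^ (idx (v (A i0)) + 1))) := by
            rw [Finset.sum_const, card_univ, Fintype.card_fin, nsmul_eq_mul]; ring
        _ ≤ _ := h1
    have hold_le : ∑ j ∈ J, f (v (A j)) ≤ -(q ^ (idx (v (A i0)))) := by
      rw [← Finset.add_sum_erase J (fun j => f (v (A j))) hi0J]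
      have h2 : ∑ j ∈ J.erase i0, f (v (A j)) ≤ 0 :=
        Finset.sum_nonpos fun j _ => hfneg _
      have h3 : f (v (A i0)) = -(q ^ (idx (v (A i0)))) := by simp [hf]
      linarith
    have hkn : (J.card : ℝ) ≤ n := by
      have h : J.card ≤ n := by simpa using card_le_univ J
      exact_mod_cast h
    have hkey : (J.card : ℝ) * q ^ (idx (v (A i0)) + 1) < q ^ (idx (v (A i0))) := by
      have hp : 0 < q ^ (idx (v (A i0))) := pow_pos hq0 _
      rw [pow_succ]
      calc (J.card : ℝ) * (q ^ (idx (v (A i0))) * q)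
          = ((J.card : ℝ) * q) * q ^ (idx (v (A i0))) := by ring
        _ ≤ ((n : ℝ) * q) * q ^ (idx (v (A i0))) := by
            apply mul_le_mul_of_nonneg_right _ hp.le
            exact mul_le_mul_of_nonneg_right hkn hq0.le
        _ < 1 * q ^ (idx (v (A i0))) := by
            exact mul_lt_mul_of_pos_right hnq hp
        _ = q ^ (idx (v (A i0))) := one_mul _
    have hWlt : ∑ j : Fin n, f (v (A j)) < ∑ j : Fin n, f (v (A' j)) := by
      rw [hsplit A, hsplit A']
      have hout_eq : ∑ j ∈ univ \ J, f (v (A' j)) = ∑ j ∈ univ \ J, f (v (A j)) :=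
        Finset.sum_congr rfl fun j hj => by
          rw [hout j (mem_sdiff.mp hj).2]
      rw [hout_eq]
      have : ∑ j ∈ J, f (v (A j)) < ∑ j ∈ J, f (v (A' j)) := by
        calc ∑ j ∈ J, f (v (A j)) ≤ -(q ^ (idx (v (A i0)))) := hold_le
          _ < -((J.card : ℝ) * q ^ (idx (v (A i0)) + 1)) := by linarith
          _ ≤ ∑ j ∈ J, f (v (A' j)) := hnew_ge
      linarith
    have := hP P'
    change ∑ j : Fin n, f (v (A' j)) ≤ ∑ j : Fin n, f (v (A j)) at this
    exact absurd this (not_le.mpr hWlt)
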